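/- Let L₁ → L₂ → L₃ be Lie superalgebra homomorphisms where π₂: L₂ → L₃ is a central extension (surjective with kernel contained in the center of L₂) and π₁: L₁ → L₂ is a central extension. Then the composition π₂ ∘ π₁: L₁ → L₃ is a central extension, provided L₁ is perfect. -/

import Mathlib

universe u v

/-- A Lie superalgebra over a field `F`: a `Z₂`-graded vector space with a bilinear
bracket that respects the grading and satisfies super-skew-symmetry and the
super Jacobi identity on homogeneous elements. -/
class LieSuperAlgebra (F : Type u) (L : Type v) [Field F] [AddCommGroup L] [Module F L] where
  grading : ZMod 2 → Submodule F L
  bracket : L →ₗ[F] L →ₗ[F] L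
  grading_sup : grading 0 ⊔ grading 1 = ⊤
  grading_inf : grading 0 ⊓ grading 1 = ⊥
  bracket_mem : ∀ i j : ZMod 2, ∀ x ∈ grading i, ∀ y ∈ grading j, bracket x y ∈ grading (i + j)
  super_skew : ∀ i j : ZMod 2, ∀ x ∈ grading i, ∀ y ∈ grading j,
    bracket x y = -(((-1 : F) ^ (i * j).val) • bracket y x)
  super_jacobi : ∀ i j : ZMod 2, ∀ x ∈ grading i, ∀ y ∈ grading j, ∀ z : L,
    bracket x (bracket y z) =
      bracket (bracket x y) z + ((-1 : F) ^ (i * j).val) • bracket y (bracket x z)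

namespace LieSuperAlgebra

variable (F : Type u) {L L' : Type v} [Field F] [AddCommGroup L] [Module F L]
  [LieSuperAlgebra F L] [AddCommGroup L'] [Module F L'] [LieSuperAlgebra F L']

/-- The bracket, as a binary operation. -/
def br (x y : L) : L := bracket (F := F) x y

/-- The center of a Lie superalgebra. -/
def center : Submodule F L where
  carrier := {z | ∀ x : L, br F z x = 0}
  add_mem' := by
    intro a b ha hb x
    simp only [br, map_add, LinearMap.add_apply] at *
    rw [ha x, hb x, add_zero]
  zero_mem' := by intro x; simp [br]
  smul_mem' := by
    intro c a ha x
    simp only [br, map_smul, LinearMap.smul_apply] at *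
    rw [ha x, smul_zero]

/-- A Lie superalgebra is perfect if it is spanned by brackets. -/
def IsPerfect : Prop :=
  Submodule.span F {z : L | ∃ x y : L, z = br F x y} = ⊤

/-- A homomorphism of Lie superalgebras: a linear map preserving brackets and the grading. -/
def IsHom (f : L →ₗ[F] L') : Prop :=
  (∀ x y : L, f (br F x y) = br F (f x) (f y)) ∧
    ∀ i : ZMod 2, (grading (F := F) (L := L) i).map f ≤ grading (F := F) (L := L') i

/-- A central extension: a surjective homomorphism whose kernel is central. -/
def IsCentralExtension (π : L →ₗ[F] L') : Prop :=
  IsHom F π ∧ Function.Surjective π ∧ ∀ x : L, π x = 0 → x ∈ center F (L := L)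

end LieSuperAlgebra

section Aux

open LieSuperAlgebra

variable {F : Type u} {L : Type v} [Field F] [AddCommGroup L] [Module F L]
  [LieSuperAlgebra F L]

lemma aux_decomp (z : L) : ∃ z₀ ∈ grading (F := F) (L := L) 0,
    ∃ z₁ ∈ grading (F := F) (L := L) 1, z = z₀ + z₁ := by
  have h : z ∈ grading (F := F) (L := L) 0 ⊔ grading (F := F) (L := L) 1 := by
    rw [grading_sup]; trivial
  rcases Submodule.mem_sup.mp h with ⟨a, ha, b, hb, hab⟩
  exact ⟨a, ha, b, hb, hab.symm⟩

lemma aux_inf (i : ZMod 2) :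
    grading (F := F) (L := L) i ⊓ grading (F := F) (L := L) (i + 1) = ⊥ := by
  fin_cases i
  · exact grading_inf
  · rw [inf_comm]
    convert grading_inf (F := F) (L := L) using 2 <;> rfl

lemma aux_cancel {i : ZMod 2} {a b : L} (ha : a ∈ grading (F := F) (L := L) i)
    (hb : b ∈ grading (F := F) (L := L) (i + 1)) (hab : a + b = 0) :
    a = 0 ∧ b = 0 := by
  have ha' : a ∈ grading (F := F) (L := L) i ⊓ grading (F := F) (L := L) (i + 1) := by
    refine ⟨ha, ?_⟩
    rw [eq_neg_of_add_eq_zero_left hab]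
    exact neg_mem hb
  rw [aux_inf] at ha'
  have ha0 : a = 0 := ha'
  exact ⟨ha0, by rwa [ha0, zero_add] at hab⟩

/-- Homogeneous components of a central element are central. -/
lemma aux_central_components {z z₀ z₁ : L} (hz : z ∈ center F (L := L))
    (h₀ : z₀ ∈ grading (F := F) (L := L) 0) (h₁ : z₁ ∈ grading (F := F) (L := L) 1)
    (hsum : z = z₀ + z₁) :
    z₀ ∈ center F (L := L) ∧ z₁ ∈ center F (L := L) := by
  have key : ∀ j : ZMod 2, ∀ x ∈ grading (F := F) (L := L) j,
      br F z₀ x = 0 ∧ br F z₁ x = 0 := by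
    intro j x hx
    have hzx : br F z₀ x + br F z₁ x = 0 := by
      have := hz x
      rw [hsum] at this
      simpa [br, map_add, LinearMap.add_apply] using this
    have hm₀ : br F z₀ x ∈ grading (F := F) (L := L) (0 + j) :=
      bracket_mem 0 j z₀ h₀ x hx
    have hm₁ : br F z₁ x ∈ grading (F := F) (L := L) (1 + j) :=
      bracket_mem 1 j z₁ h₁ x hx
    have e : (1 : ZMod 2) + j = (0 + j) + 1 := by ring
    rw [e] at hm₁
    exact aux_cancel hm₀ hm₁ hzx
  constructor <;> intro x <;>
    obtain ⟨x₀, hx₀, x₁, hx₁, rfl⟩ := aux_decomp (F := F) x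
  · have := (key 0 x₀ hx₀).1
    have h2 := (key 1 x₁ hx₁).1
    simp only [br, map_add] at *
    rw [this, h2, add_zero]
  · have := (key 0 x₀ hx₀).2
    have h2 := (key 1 x₁ hx₁).2
    simp only [br, map_add] at *
    rw [this, h2, add_zero]

/-- Bracketing with a central element on the right gives zero. -/
lemma aux_center_right {z : L} (hz : z ∈ center F (L := L)) (y : L) :
    br F y z = 0 := by
  obtain ⟨z₀, h₀, z₁, h₁, rfl⟩ := aux_decomp (F := F) z
  obtain ⟨hz₀, hz₁⟩ := aux_central_components hz h₀ h₁ rfl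
  obtain ⟨y₀, hy₀, y₁, hy₁, rfl⟩ := aux_decomp (F := F) y
  have key : ∀ i j : ZMod 2, ∀ a ∈ grading (F := F) (L := L) i,
      ∀ b ∈ grading (F := F) (L := L) j, b ∈ center F (L := L) → br F a b = 0 := by
    intro i j a ha b hb hbc
    have := super_skew i j a ha b hb
    rw [show bracket (F := F) b a = 0 from hbc a] at this
    simpa [br] using this
  have e00 := key 0 0 y₀ hy₀ z₀ h₀ hz₀
  have e01 := key 0 1 y₀ hy₀ z₁ h₁ hz₁
  have e10 := key 1 0 y₁ hy₁ z₀ h₀ hz₀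
  have e11 := key 1 1 y₁ hy₁ z₁ h₁ hz₁
  simp only [br, map_add, LinearMap.add_apply] at *
  rw [e00, e01, e10, e11]
  simp

end Aux

open LieSuperAlgebra in
/-- The composition of two central extensions of Lie superalgebras is again a
central extension, provided the top superalgebra is perfect. -/
theorem comp_central_extension {F : Type u} {L₁ L₂ L₃ : Type v} [Field F]
    [AddCommGroup L₁] [Module F L₁] [LieSuperAlgebra F L₁]
    [AddCommGroup L₂] [Module F L₂] [LieSuperAlgebra F L₂]
    [AddCommGroup L₃] [Module F L₃] [LieSuperAlgebra F L₃]
    (π₁ : L₁ →ₗ[F] L₂) (π₂ : L₂ →ₗ[F] L₃)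
    (h₁ : IsCentralExtension F π₁) (h₂ : IsCentralExtension F π₂)
    (hperf : IsPerfect F (L := L₁)) :
    IsCentralExtension F (π₂.comp π₁) := by
  obtain ⟨⟨hbr₁, hgr₁⟩, hsurj₁, hker₁⟩ := h₁
  obtain ⟨⟨hbr₂, hgr₂⟩, hsurj₂, hker₂⟩ := h₂
  refine ⟨⟨?_, ?_⟩, hsurj₂.comp hsurj₁, ?_⟩
  · intro x y
    simp only [LinearMap.comp_apply, hbr₁, hbr₂]
  · intro i
    rw [Submodule.map_comp]
    exact le_trans (Submodule.map_mono (hgr₁ i)) (hgr₂ i)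
  · -- kernel is central
    intro x hx
    simp only [LinearMap.comp_apply] at hx
    have hπ₁x : π₁ x ∈ center F (L := L₂) := hker₂ _ hx
    -- For every y, the bracket [x, y] lies in the center of L₁.
    have hbrc : ∀ y : L₁, br F x y ∈ center F (L := L₁) := by
      intro y
      apply hker₁
      rw [hbr₁, hπ₁x (π₁ y)]
    -- Homogeneous components of x also have this property.
    obtain ⟨x₀, hx₀, x₁, hx₁, hxsum⟩ := aux_decomp (F := F) x
    have hπc : π₁ x₀ ∈ center F (L := L₂) ∧ π₁ x₁ ∈ center F (L := L₂) := by
      refine aux_central_components hπ₁x (hgr₁ 0 ⟨x₀, hx₀, rfl⟩)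
        (hgr₁ 1 ⟨x₁, hx₁, rfl⟩) ?_
      rw [hxsum, map_add]
    have hbrc' : ∀ i : ZMod 2, ∀ xi : L₁, xi ∈ grading (F := F) (L := L₁) i →
        π₁ xi ∈ center F (L := L₂) → ∀ y : L₁, br F xi y ∈ center F (L := L₁) := by
      intro i xi _ hxic y
      apply hker₁
      rw [hbr₁, hxic (π₁ y)]
    -- x bracketed with any bracket is zero, using the super Jacobi identity.
    have hkey : ∀ i : ZMod 2, ∀ xi : L₁, xi ∈ grading (F := F) (L := L₁) i →
        π₁ xi ∈ center F (L := L₂) → ∀ a b : L₁, br F xi (br F a b) = 0 := by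
      intro i xi hxi hxic a b
      obtain ⟨a₀, ha₀, a₁, ha₁, rfl⟩ := aux_decomp (F := F) a
      have step : ∀ j : ZMod 2, ∀ aj : L₁, aj ∈ grading (F := F) (L := L₁) j →
          br F xi (br F aj b) = 0 := by
        intro j aj haj
        have hj := super_jacobi i j xi hxi aj haj b
        have e1 : bracket (F := F) (bracket (F := F) xi aj) b = 0 :=
          (hbrc' i xi hxi hxic aj) b
        have e2 : bracket (F := F) aj (bracket (F := F) xi b) = 0 :=
          aux_center_right (hbrc' i xi hxi hxic b) aj
        rw [e1, e2] at hj
        simpa [br] using hj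
      have := step 0 a₀ ha₀
      have h2 := step 1 a₁ ha₁
      simp only [br, map_add, LinearMap.add_apply] at *
      rw [this, h2, add_zero]
    -- Conclude that x is central using perfectness.
    intro y
    have hy : y ∈ Submodule.span F {z : L₁ | ∃ a b : L₁, z = br F a b} := by
      rw [hperf]; trivial
    have hxz : ∀ z ∈ Submodule.span F {z : L₁ | ∃ a b : L₁, z = br F a b},
        br F x z = 0 := by
      intro z hz
      induction hz using Submodule.span_induction with
      | mem w hw =>
        obtain ⟨a, b, rfl⟩ := hw
        have e0 := hkey 0 x₀ hx₀ hπc.1 a b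
        have e1 := hkey 1 x₁ hx₁ hπc.2 a b
        rw [hxsum]
        simp only [br, map_add, LinearMap.add_apply] at *
        rw [e0, e1, add_zero]
      | zero => simp [br]
      | add u v _ _ hu hv => simp only [br, map_add] at *; rw [hu, hv, add_zero]
      | smul c u _ hu => simp only [br, map_smul] at *; rw [hu, smul_zero]
    exact hxz y hy
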